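/- Let ξ: G → B be a surjective graph homomorphism whose fibres are the equivalence classes of an equivalence relation ∼ on N_G. For equivalence classes X, Y with Y = {y_1,...,y_k}, let v_i = |{a ∈ A_G : t(a) = y_i, s(a) ∈ X}|. Then the contribution to the total error Δ_ξ from pairs (a, y) with a ∈ B(X,Y) and y ∈ Y is at least min over h ≥ 1 of Σ_{i=1}^k (v_i − h + 2·max(h − v_i, 0)), which equals the value at h = a positive median of (v_1,...,v_k); in particular Δ_ξ is bounded below by the sum of these per-class-pair minima. -/

import Mathlib

/-- A directed multigraph: node set `N`, arc set `A`, source and target maps. -/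
structure Multigraph (N A : Type) where
  s : A → N
  t : A → N

/-- A homomorphism of directed multigraphs: maps on nodes and arcs commuting
with source and target. -/
structure GraphHom {N A N' A' : Type} (G : Multigraph N A) (B : Multigraph N' A') where
  nodeMap : N → N'
  arcMap : A → A'
  map_s : ∀ a, B.s (arcMap a) = nodeMap (G.s a)
  map_t : ∀ a, B.t (arcMap a) = nodeMap (G.t a)

/-- A fibration: every arc of the base lifts uniquely at every node in the
fibre of its target. -/
def IsFibration {N A N' A' : Type} {G : Multigraph N A} {B : Multigraph N' A'}
    (φ : GraphHom G B) : Prop :=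
  ∀ (a : A') (x : N), φ.nodeMap x = B.t a →
    ∃! a' : A, φ.arcMap a' = a ∧ G.t a' = x

open Classical in
/-- The total error `Δ_ξ = Σ_{a,y} |δ_ξ(a,y)|` of a graph homomorphism `ξ`,
where `δ_ξ(a,y)` is the number of liftings of the arc `a` at the node `y`
(for `y` in the fibre of the target of `a`) minus one. -/
noncomputable def totalError {N A N' A' : Type} [Fintype N] [Fintype A']
    (G : Multigraph N A) (B : Multigraph N' A') (ξ : GraphHom G B) : ℤ :=
  ∑ a : A', ∑ y : N,
    if ξ.nodeMap y = B.t a then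
      |(Nat.card {a' : A // ξ.arcMap a' = a ∧ G.t a' = y} : ℤ) - 1|
    else 0

/-- `vval ξ X y` : the number of arcs of `G` with target `y` whose source lies
in the class (fibre) `X`. -/
noncomputable def vval {N A N' A' : Type} {G : Multigraph N A} {B : Multigraph N' A'}
    (ξ : GraphHom G B) (X : N') (y : N) : ℕ :=
  Nat.card {a : A // G.t a = y ∧ ξ.nodeMap (G.s a) = X}

open Classical in
/-- The contribution to the total error `Δ_ξ` of the pairs `(a, y)` with
`a ∈ B(X,Y)` and `y` in the class `Y`. -/
noncomputable def contribution {N A N' A' : Type} [Fintype N] [Fintype A']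
    (G : Multigraph N A) (B : Multigraph N' A') (ξ : GraphHom G B) (X Y : N') : ℤ :=
  ∑ a : A', ∑ y : N,
    if B.s a = X ∧ B.t a = Y ∧ ξ.nodeMap y = Y then
      |(Nat.card {a' : A // ξ.arcMap a' = a ∧ G.t a' = y} : ℤ) - 1|
    else 0

open Classical in
/-- `gfun ξ X Y h = Σ_{y ∈ Y} (v_y − h + 2·max(h − v_y, 0))`, the optimal
contribution achievable with `h` parallel base arcs from `X` to `Y`. -/
noncomputable def gfun {N A N' A' : Type} [Fintype N] {G : Multigraph N A}
    {B : Multigraph N' A'} (ξ : GraphHom G B) (X Y : N') (h : ℕ) : ℤ :=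
  ∑ y : N,
    if ξ.nodeMap y = Y then
      ((vval ξ X y : ℤ) - h + 2 * max ((h : ℤ) - vval ξ X y) 0)
    else 0

open Classical in
/-- `h` is a positive median of the multiset of values `v_y` for `y` in the
class `Y`. -/
def IsPosMedianOnFibre {N A N' A' : Type} [Fintype N] {G : Multigraph N A}
    {B : Multigraph N' A'} (ξ : GraphHom G B) (X Y : N') (h : ℕ) : Prop :=
  ∃ m : ℕ, h = max 1 m ∧
    2 * (Finset.univ.filter (fun y : N => ξ.nodeMap y = Y ∧ vval ξ X y < m)).card ≤
      (Finset.univ.filter (fun y : N => ξ.nodeMap y = Y)).card ∧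
    2 * (Finset.univ.filter (fun y : N => ξ.nodeMap y = Y ∧ m < vval ξ X y)).card ≤
      (Finset.univ.filter (fun y : N => ξ.nodeMap y = Y)).card


section Aux

open Classical Finset
set_option linter.unusedSectionVars false

variable {N A N' A' : Type} [Fintype N] [Fintype A] [Fintype N'] [Fintype A']
variable {G : Multigraph N A} {B : Multigraph N' A'} (ξ : GraphHom G B)

private lemma abs_step (a b : ℤ) : |a - (b+1)| = |a - b| + (if a ≤ b then 1 else -1) := by
  split_ifs with h
  · rw [abs_of_nonpos (by omega), abs_of_nonpos (by omega)]; ring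
  · push_neg at h
    rw [abs_of_nonneg (by omega), abs_of_nonneg (by omega)]; ring

open Classical in
private lemma gfun_eq_abs (X Y : N') (h : ℕ) :
    gfun ξ X Y h
      = ∑ y ∈ univ.filter (fun y : N => ξ.nodeMap y = Y), |(vval ξ X y : ℤ) - h| := by
  unfold gfun
  rw [← Finset.sum_filter]
  apply Finset.sum_congr rfl
  intro y _
  rcases le_total ((h : ℤ)) (vval ξ X y : ℤ) with h1 | h1
  · rw [max_eq_right (by omega), abs_of_nonneg (by omega)]; ring
  · rw [max_eq_left (by omega), abs_of_nonpos (by omega)]; ring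

open Classical in
private lemma gfun_nonneg (X Y : N') (h : ℕ) : 0 ≤ gfun ξ X Y h := by
  rw [gfun_eq_abs]
  exact Finset.sum_nonneg fun y _ => abs_nonneg _

open Classical in
private lemma gfun_step (X Y : N') (h : ℕ) :
    gfun ξ X Y (h+1) = gfun ξ X Y h
      + 2 * ((univ.filter (fun y : N => ξ.nodeMap y = Y ∧ vval ξ X y ≤ h)).card : ℤ)
      - ((univ.filter (fun y : N => ξ.nodeMap y = Y)).card : ℤ) := by
  classical
  have hsplit : (univ.filter (fun y : N => ξ.nodeMap y = Y ∧ vval ξ X y ≤ h)).card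
      + (univ.filter (fun y : N => ξ.nodeMap y = Y ∧ ¬ vval ξ X y ≤ h)).card
      = (univ.filter (fun y : N => ξ.nodeMap y = Y)).card := by
    rw [← Finset.filter_filter, ← Finset.filter_filter,
      Finset.card_filter_add_card_filter_not]
  rw [gfun_eq_abs, gfun_eq_abs]
  have hterm : ∀ y ∈ univ.filter (fun y : N => ξ.nodeMap y = Y),
      |(vval ξ X y : ℤ) - (h+1 : ℕ)|
        = |(vval ξ X y : ℤ) - h| + (if vval ξ X y ≤ h then (1:ℤ) else -1) := by
    intro y _
    push_cast
    rw [abs_step]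
    congr 1
    by_cases hv : vval ξ X y ≤ h
    · rw [if_pos hv, if_pos (by exact_mod_cast hv)]
    · rw [if_neg hv, if_neg (by exact_mod_cast hv)]
  rw [Finset.sum_congr rfl hterm, Finset.sum_add_distrib, Finset.sum_ite,
    Finset.sum_const, Finset.sum_const, Finset.filter_filter, Finset.filter_filter]
  simp only [nsmul_eq_mul, smul_eq_mul, mul_one, mul_neg]
  push_cast [← hsplit]
  ring

private lemma chain_up (f : ℕ → ℤ) (a b : ℕ) (hab : a ≤ b)
    (H : ∀ j, a ≤ j → j < b → f j ≤ f (j+1)) : f a ≤ f b := by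
  induction b, hab using Nat.le_induction with
  | base => exact le_refl _
  | succ n hn ih =>
      exact (ih fun j hj hjb => H j hj (by omega)).trans (H n hn (by omega))

private lemma chain_down (f : ℕ → ℤ) (a b : ℕ) (hab : a ≤ b)
    (H : ∀ j, a ≤ j → j < b → f (j+1) ≤ f j) : f b ≤ f a := by
  induction b, hab using Nat.le_induction with
  | base => exact le_refl _
  | succ n hn ih =>
      exact (H n hn (by omega)).trans (ih fun j hj hjb => H j hj (by omega))

open Classical in
private lemma gfun_min (X Y : N') (h : ℕ) (hm : IsPosMedianOnFibre ξ X Y h) :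
    ∀ h' : ℕ, 1 ≤ h' → gfun ξ X Y h ≤ gfun ξ X Y h' := by
  obtain ⟨m, hh, hlt, hgt⟩ := hm
  intro h' h1
  rcases le_or_gt h h' with hc | hc
  · refine chain_up (gfun ξ X Y) h h' hc ?_
    intro j hj _
    rw [gfun_step]
    have hmj : m ≤ j := le_trans (le_trans (le_max_right 1 m) hh.ge) hj
    have hsub : (univ.filter fun y : N => ξ.nodeMap y = Y ∧ ¬ vval ξ X y ≤ j)
        ⊆ (univ.filter fun y : N => ξ.nodeMap y = Y ∧ m < vval ξ X y) := by
      intro y hy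
      simp only [Finset.mem_filter, Finset.mem_univ, true_and] at hy ⊢
      exact ⟨hy.1, by omega⟩
    have hcard := Finset.card_le_card hsub
    have hsplit : (univ.filter (fun y : N => ξ.nodeMap y = Y ∧ vval ξ X y ≤ j)).card
        + (univ.filter (fun y : N => ξ.nodeMap y = Y ∧ ¬ vval ξ X y ≤ j)).card
        = (univ.filter (fun y : N => ξ.nodeMap y = Y)).card := by
      rw [← Finset.filter_filter, ← Finset.filter_filter,
        Finset.card_filter_add_card_filter_not]
    have : (univ.filter (fun y : N => ξ.nodeMap y = Y)).card
        ≤ 2 * (univ.filter (fun y : N => ξ.nodeMap y = Y ∧ vval ξ X y ≤ j)).card := by omega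
    have := (Int.ofNat_le).2 this
    push_cast at this ⊢
    omega
  · have hm1 : 1 ≤ m := by omega
    have hhm : h = m := by omega
    refine chain_down (gfun ξ X Y) h' h hc.le ?_
    intro j hj hjh
    rw [gfun_step]
    have hjm : j < m := by omega
    have hsub : (univ.filter fun y : N => ξ.nodeMap y = Y ∧ vval ξ X y ≤ j)
        ⊆ (univ.filter fun y : N => ξ.nodeMap y = Y ∧ vval ξ X y < m) := by
      intro y hy
      simp only [Finset.mem_filter, Finset.mem_univ, true_and] at hy ⊢
      exact ⟨hy.1, by omega⟩
    have hcard := Finset.card_le_card hsub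
    have : 2 * (univ.filter (fun y : N => ξ.nodeMap y = Y ∧ vval ξ X y ≤ j)).card
        ≤ (univ.filter (fun y : N => ξ.nodeMap y = Y)).card := by omega
    have := (Int.ofNat_le).2 this
    push_cast at this ⊢
    omega

open Classical in
private lemma ncard_eq (a : A') (y : N) :
    Nat.card {a' : A // ξ.arcMap a' = a ∧ G.t a' = y}
      = (univ.filter (fun a' : A => ξ.arcMap a' = a ∧ G.t a' = y)).card := by
  rw [Nat.card_eq_fintype_card, Fintype.card_subtype]

open Classical in
private lemma sum_n (X Y : N') (y : N) (hy : ξ.nodeMap y = Y) :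
    ∑ a ∈ univ.filter (fun a : A' => B.s a = X ∧ B.t a = Y),
      (univ.filter (fun a' : A => ξ.arcMap a' = a ∧ G.t a' = y)).card
    = vval ξ X y := by
  rw [vval, Nat.card_eq_fintype_card, Fintype.card_subtype]
  rw [Finset.card_eq_sum_card_fiberwise
    (f := ξ.arcMap) (t := univ.filter (fun a : A' => B.s a = X ∧ B.t a = Y))
    (fun a' ha' => by
      simp only [Finset.mem_coe, Finset.mem_filter, Finset.mem_univ, true_and] at ha' ⊢
      exact ⟨by rw [ξ.map_s, ha'.2], by rw [ξ.map_t, ha'.1, hy]⟩)]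
  apply Finset.sum_congr rfl
  intro a ha
  simp only [Finset.mem_filter, Finset.mem_univ, true_and] at ha
  congr 1
  ext a'
  simp only [Finset.mem_filter, Finset.mem_univ, true_and]
  constructor <;> intro hmem <;>
  · have harc : ξ.arcMap a' = a := by tauto
    have hsx : ξ.nodeMap (G.s a') = X := by rw [← ξ.map_s, harc, ha.1]
    tauto

open Classical in
private lemma contribution_eq (X Y : N') :
    contribution G B ξ X Y
      = ∑ y ∈ univ.filter (fun y : N => ξ.nodeMap y = Y),
          ∑ a ∈ univ.filter (fun a : A' => B.s a = X ∧ B.t a = Y),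
            |((univ.filter (fun a' : A => ξ.arcMap a' = a ∧ G.t a' = y)).card : ℤ) - 1| := by
  rw [contribution, Finset.sum_comm]
  have hstep : ∀ y : N,
      (∑ a : A', if B.s a = X ∧ B.t a = Y ∧ ξ.nodeMap y = Y then
          |(Nat.card {a' : A // ξ.arcMap a' = a ∧ G.t a' = y} : ℤ) - 1| else 0)
      = (if ξ.nodeMap y = Y then
          ∑ a ∈ univ.filter (fun a : A' => B.s a = X ∧ B.t a = Y),
            |((univ.filter (fun a' : A => ξ.arcMap a' = a ∧ G.t a' = y)).card : ℤ) - 1|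
         else 0) := by
    intro y
    by_cases hy : ξ.nodeMap y = Y
    · rw [if_pos hy, Finset.sum_filter]
      apply Finset.sum_congr rfl
      intro a _
      rw [ncard_eq]
      by_cases hx : B.s a = X ∧ B.t a = Y
      · rw [if_pos ⟨hx.1, hx.2, hy⟩, if_pos hx]
      · rw [if_neg (by tauto), if_neg hx]
    · rw [if_neg hy]
      apply Finset.sum_eq_zero
      intro a _
      rw [if_neg (fun hh => hy hh.2.2)]
  rw [Finset.sum_congr rfl (fun y _ => hstep y), Finset.sum_filter]

open Classical in
private lemma contribution_nonneg (X Y : N') : 0 ≤ contribution G B ξ X Y := by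
  rw [contribution_eq]
  exact Finset.sum_nonneg fun y _ => Finset.sum_nonneg fun a _ => abs_nonneg _

open Classical in
private lemma contribution_ge (X Y : N') :
    gfun ξ X Y (univ.filter (fun a : A' => B.s a = X ∧ B.t a = Y)).card
      ≤ contribution G B ξ X Y := by
  rw [contribution_eq, gfun_eq_abs]
  apply Finset.sum_le_sum
  intro y hy
  simp only [Finset.mem_filter, Finset.mem_univ, true_and] at hy
  calc |(vval ξ X y : ℤ) - (univ.filter (fun a : A' => B.s a = X ∧ B.t a = Y)).card|
      = |∑ a ∈ univ.filter (fun a : A' => B.s a = X ∧ B.t a = Y),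
          (((univ.filter (fun a' : A => ξ.arcMap a' = a ∧ G.t a' = y)).card : ℤ) - 1)| := by
        rw [Finset.sum_sub_distrib, Finset.sum_const, ← Nat.cast_sum, sum_n ξ X Y y hy]
        simp
    _ ≤ _ := Finset.abs_sum_le_sum_abs _ _

private lemma sum4_comm {α β γ δ : Type} [Fintype α] [Fintype β] [Fintype γ] [Fintype δ]
    (f : α → β → γ → δ → ℤ) :
    ∑ a : α, ∑ b : β, ∑ c : γ, ∑ d : δ, f a b c d
      = ∑ c : γ, ∑ d : δ, ∑ a : α, ∑ b : β, f a b c d := by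
  trans ∑ a : α, ∑ c : γ, ∑ b : β, ∑ d : δ, f a b c d
  · exact Finset.sum_congr rfl fun a _ => Finset.sum_comm
  trans ∑ c : γ, ∑ a : α, ∑ b : β, ∑ d : δ, f a b c d
  · exact Finset.sum_comm
  apply Finset.sum_congr rfl; intro c _
  trans ∑ a : α, ∑ d : δ, ∑ b : β, f a b c d
  · exact Finset.sum_congr rfl fun a _ => Finset.sum_comm
  exact Finset.sum_comm

open Classical in
private lemma totalError_eq :
    totalError G B ξ = ∑ X : N', ∑ Y : N', contribution G B ξ X Y := by
  have h1 : ∀ (a : A') (y : N),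
      (∑ X : N', ∑ Y : N', if B.s a = X ∧ B.t a = Y ∧ ξ.nodeMap y = Y then
          |(Nat.card {a' : A // ξ.arcMap a' = a ∧ G.t a' = y} : ℤ) - 1| else 0)
      = if ξ.nodeMap y = B.t a then
          |(Nat.card {a' : A // ξ.arcMap a' = a ∧ G.t a' = y} : ℤ) - 1| else 0 := by
    intro a y
    have h2 : ∀ X : N',
        (∑ Y : N', if B.s a = X ∧ B.t a = Y ∧ ξ.nodeMap y = Y then
            |(Nat.card {a' : A // ξ.arcMap a' = a ∧ G.t a' = y} : ℤ) - 1| else 0)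
        = if B.s a = X ∧ ξ.nodeMap y = B.t a then
            |(Nat.card {a' : A // ξ.arcMap a' = a ∧ G.t a' = y} : ℤ) - 1| else 0 := by
      intro X
      rw [Finset.sum_eq_single (B.t a)]
      · by_cases hc : B.s a = X ∧ ξ.nodeMap y = B.t a
        · rw [if_pos ⟨hc.1, rfl, hc.2⟩, if_pos hc]
        · rw [if_neg (by tauto), if_neg hc]
      · intro Y _ hY; rw [if_neg (fun hh => hY hh.2.1.symm)]
      · intro h; exact absurd (Finset.mem_univ _) h
    rw [Finset.sum_congr rfl (fun X _ => h2 X), Finset.sum_eq_single (B.s a)]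
    · by_cases hc : ξ.nodeMap y = B.t a
      · rw [if_pos ⟨rfl, hc⟩, if_pos hc]
      · rw [if_neg (by tauto), if_neg hc]
    · intro X _ hX; rw [if_neg (fun hh => hX hh.1.symm)]
    · intro h; exact absurd (Finset.mem_univ _) h
  symm
  simp only [contribution]
  rw [sum4_comm, totalError]
  exact Finset.sum_congr rfl fun a _ => Finset.sum_congr rfl fun y _ => h1 a y

end Aux

open Classical in
/-- For a surjective homomorphism `ξ` whose fibres are the classes of `∼`, the
contribution to `Δ_ξ` of each pair of classes `(X, Y)` (with some `v_i > 0`)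
is at least `min_{h ≥ 1} Σ_i (v_i − h + 2·max(h − v_i, 0))`, which equals the
value of that sum at a positive median of `(v_1, …, v_k)`; in particular
`Δ_ξ` is bounded below by the sum of these per-class-pair minima. -/
theorem contribution_lower_bound {N A N' A' : Type}
    [Fintype N] [Fintype A] [Fintype N'] [Fintype A']
    (G : Multigraph N A) (B : Multigraph N' A') (ξ : GraphHom G B)
    (hsurjN : Function.Surjective ξ.nodeMap)
    (hsurjA : Function.Surjective ξ.arcMap) :
    (∀ X Y : N', (∃ y : N, ξ.nodeMap y = Y ∧ 0 < vval ξ X y) →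
      (sInf {c : ℤ | ∃ h : ℕ, 1 ≤ h ∧ c = gfun ξ X Y h} ≤ contribution G B ξ X Y) ∧
      (∀ h : ℕ, IsPosMedianOnFibre ξ X Y h →
        gfun ξ X Y h = sInf {c : ℤ | ∃ h' : ℕ, 1 ≤ h' ∧ c = gfun ξ X Y h'})) ∧
    (∑ X : N', ∑ Y : N',
        if ∃ y : N, ξ.nodeMap y = Y ∧ 0 < vval ξ X y then
          sInf {c : ℤ | ∃ h : ℕ, 1 ≤ h ∧ c = gfun ξ X Y h}
        else 0)
      ≤ totalError G B ξ := by
  classical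
  have hBdd : ∀ X Y : N', BddBelow {c : ℤ | ∃ h : ℕ, 1 ≤ h ∧ c = gfun ξ X Y h} :=
    fun X Y => ⟨0, fun c ⟨h, _, hc⟩ => hc ▸ gfun_nonneg ξ X Y h⟩
  have hNe : ∀ X Y : N', {c : ℤ | ∃ h : ℕ, 1 ≤ h ∧ c = gfun ξ X Y h}.Nonempty :=
    fun X Y => ⟨gfun ξ X Y 1, 1, le_refl 1, rfl⟩
  have hpart1 : ∀ X Y : N', (∃ y : N, ξ.nodeMap y = Y ∧ 0 < vval ξ X y) →
      sInf {c : ℤ | ∃ h : ℕ, 1 ≤ h ∧ c = gfun ξ X Y h} ≤ contribution G B ξ X Y := by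
    rintro X Y ⟨y, hy, hv⟩
    have hne : Nonempty {a : A // G.t a = y ∧ ξ.nodeMap (G.s a) = X} :=
      (Nat.card_pos_iff.mp (by simpa [vval] using hv)).1
    obtain ⟨⟨a', ha1, ha2⟩⟩ := hne
    have hmem : ξ.arcMap a' ∈ Finset.univ.filter (fun a : A' => B.s a = X ∧ B.t a = Y) := by
      simp only [Finset.mem_filter, Finset.mem_univ, true_and]
      exact ⟨by rw [ξ.map_s, ha2], by rw [ξ.map_t, ha1, hy]⟩
    have hH : 1 ≤ (Finset.univ.filter (fun a : A' => B.s a = X ∧ B.t a = Y)).card :=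
      Finset.card_pos.mpr ⟨_, hmem⟩
    exact le_trans (csInf_le (hBdd X Y) ⟨_, hH, rfl⟩) (contribution_ge ξ X Y)
  have hpart2 : ∀ (X Y : N') (h : ℕ), IsPosMedianOnFibre ξ X Y h →
      gfun ξ X Y h = sInf {c : ℤ | ∃ h' : ℕ, 1 ≤ h' ∧ c = gfun ξ X Y h'} := by
    intro X Y h hm
    obtain ⟨m, hh, hm1, hm2⟩ := hm
    refine le_antisymm (le_csInf (hNe X Y) ?_) (csInf_le (hBdd X Y) ⟨h, ?_, rfl⟩)
    · rintro c ⟨h', h1, rfl⟩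
      exact gfun_min ξ X Y h ⟨m, hh, hm1, hm2⟩ h' h1
    · exact hh ▸ le_max_left 1 m
  refine ⟨fun X Y hex => ⟨hpart1 X Y hex, fun h hm => hpart2 X Y h hm⟩, ?_⟩
  rw [totalError_eq ξ]
  refine Finset.sum_le_sum fun X _ => Finset.sum_le_sum fun Y _ => ?_
  split_ifs with hex
  · exact hpart1 X Y hex
  · exact contribution_nonneg ξ X Y
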